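/- Let $G$ be a finite group and $\pi : A(G) \to G$ the unique group homomorphism with $\pi \circ \varphi_G = \mathrm{id}_G$, and let $Z_1 = \ker \pi$. Then for every $z \in Z_1$, $z$ belongs to the derived (commutator) subgroup of $A(G)$ if and only if $z$ has finite order; i.e. $Z_1 \cap A(G)' = Tor(Z_1)$. -/

import Mathlib

open Rack Quandles
open scoped commutatorElement

-- extensionality for homs out of the enveloping group
theorem stmt14_hom_ext {G : Type*} [Group G] {H : Type*} [Group H]
    (f g : Rack.EnvelGroup (Quandle.Conj G) →* H)
    (h : ∀ x : G, f (Rack.toEnvelGroup (Quandle.Conj G) x)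
        = g (Rack.toEnvelGroup (Quandle.Conj G) x)) : f = g := by
  ext a
  refine Quotient.inductionOn a ?_
  intro p
  induction p with
  | unit => exact f.map_one.trans g.map_one.symm
  | incl x => exact h x
  | mul a b iha ihb =>
      exact (f.map_mul ⟦a⟧ ⟦b⟧).trans (by rw [iha, ihb]; exact (g.map_mul ⟦a⟧ ⟦b⟧).symm)
  | inv a iha =>
      exact (f.map_inv ⟦a⟧).trans (by rw [iha]; exact (g.map_inv ⟦a⟧).symm)

theorem stmt14_conj {G : Type*} [Group G] (x y : G) :
    Rack.toEnvelGroup (Quandle.Conj G) (x * y * x⁻¹)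
      = Rack.toEnvelGroup (Quandle.Conj G) x * Rack.toEnvelGroup (Quandle.Conj G) y
        * (Rack.toEnvelGroup (Quandle.Conj G) x)⁻¹ := by
  have := (Rack.toEnvelGroup (Quandle.Conj G)).map_act (x := x) (y := y)
  rwa [Quandle.conj_act_eq_conj, Quandle.conj_act_eq_conj] at this

theorem stmt14_closure {G : Type*} [Group G] :
    Subgroup.closure (Set.range (Rack.toEnvelGroup (Quandle.Conj G))) = ⊤ := by
  set φ := Rack.toEnvelGroup (Quandle.Conj G)
  set H := Subgroup.closure (Set.range φ) with hH
  have hmem : ∀ x : G, φ x ∈ H := fun x => Subgroup.subset_closure ⟨x, rfl⟩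
  let f₀ : Quandle.Conj G →◃ Quandle.Conj ↥H :=
    { toFun := fun x => ⟨φ x, hmem x⟩
      map_act' := by
        intro x y
        apply Subtype.ext
        show (φ (Shelf.act x y) : Rack.EnvelGroup (Quandle.Conj G)) = _
        rw [Quandle.conj_act_eq_conj]
        exact stmt14_conj x y }
  let j : Rack.EnvelGroup (Quandle.Conj G) →* Rack.EnvelGroup (Quandle.Conj G) :=
    H.subtype.comp (Rack.toEnvelGroup.map f₀)
  have hj : j = MonoidHom.id _ := by
    apply stmt14_hom_ext
    intro x
    rfl
  rw [eq_top_iff]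
  intro a _
  have : j a ∈ H := by
    simp only [j, MonoidHom.comp_apply]
    exact (Rack.toEnvelGroup.map f₀ a).2
  rwa [hj] at this

theorem stmt14_conj_formula {G : Type*} [Group G]
    (π : Rack.EnvelGroup (Quandle.Conj G) →* G)
    (hπ : ∀ g : G, π (Rack.toEnvelGroup (Quandle.Conj G) g) = g)
    (a : Rack.EnvelGroup (Quandle.Conj G)) (x : G) :
    a * Rack.toEnvelGroup (Quandle.Conj G) x * a⁻¹
      = Rack.toEnvelGroup (Quandle.Conj G) (π a * x * (π a)⁻¹) := by
  have ha : a ∈ Subgroup.closure (Set.range (Rack.toEnvelGroup (Quandle.Conj G))) := by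
    rw [stmt14_closure]; trivial
  induction ha using Subgroup.closure_induction generalizing x with
  | mem b hb =>
      obtain ⟨y, rfl⟩ := hb
      rw [hπ, ← stmt14_conj]
  | one => simp
  | mul b c _ _ ihb ihc =>
      have h1 : b * c * Rack.toEnvelGroup (Quandle.Conj G) x * (b * c)⁻¹
          = b * (c * Rack.toEnvelGroup (Quandle.Conj G) x * c⁻¹) * b⁻¹ := by group
      rw [h1, ihc, ihb, π.map_mul]
      congr 1
      group
  | inv b _ ihb =>
      have key := ihb ((π b)⁻¹ * x * π b)
      have h1 : π b * ((π b)⁻¹ * x * π b) * (π b)⁻¹ = x := by group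
      rw [h1] at key
      rw [π.map_inv, inv_inv, ← key]
      group

theorem stmt14_finorder_mem_commutator {G : Type*} [Group G]
    (z : Rack.EnvelGroup (Quandle.Conj G)) (hz : IsOfFinOrder z) :
    z ∈ commutator (Rack.EnvelGroup (Quandle.Conj G)) := by
  classical
  set φ := Rack.toEnvelGroup (Quandle.Conj G) with hφ
  -- the quandle morphism to the free abelian group on conjugacy classes
  let f₁ : Quandle.Conj G →◃ Quandle.Conj (Multiplicative (ConjClasses G →₀ ℤ)) :=
    { toFun := fun x => Multiplicative.ofAdd (Finsupp.single (ConjClasses.mk x) 1)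
      map_act' := by
        intro x y
        show Multiplicative.ofAdd (Finsupp.single (ConjClasses.mk (Shelf.act x y)) 1)
          = Shelf.act _ _
        rw [Quandle.conj_act_eq_conj, Quandle.conj_act_eq_conj]
        have h1 : ConjClasses.mk (x * y * x⁻¹) = ConjClasses.mk (y : G) :=
          ConjClasses.mk_eq_mk_iff_isConj.mpr (isConj_iff.mpr ⟨x⁻¹, by group⟩)
        rw [h1, mul_comm (Multiplicative.ofAdd (Finsupp.single (ConjClasses.mk (x : G)) 1)),
          mul_inv_cancel_right] }
  let θ : Rack.EnvelGroup (Quandle.Conj G) →* Multiplicative (ConjClasses G →₀ ℤ) :=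
    Rack.toEnvelGroup.map f₁
  -- section from conjugacy classes into the abelianization
  let e : ConjClasses G → Abelianization (Rack.EnvelGroup (Quandle.Conj G)) :=
    Quotient.lift (fun g => Abelianization.of (φ g)) (by
      intro a b hab
      obtain ⟨c, hc⟩ := isConj_iff.mp hab
      have : φ b = φ c * φ a * (φ c)⁻¹ := by rw [← hc, stmt14_conj]
      simp only [this, map_mul, map_inv]
      rw [mul_comm (Abelianization.of (φ c)), mul_inv_cancel_right])
  have he : ∀ g : G, e (ConjClasses.mk g) = Abelianization.of (φ g) := fun g => rfl
  let s : (ConjClasses G →₀ ℤ) →+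
      Additive (Abelianization (Rack.EnvelGroup (Quandle.Conj G))) :=
    Finsupp.liftAddHom fun c => (zmultiplesHom _) (Additive.ofMul (e c))
  let ψ : Rack.EnvelGroup (Quandle.Conj G) →*
      Abelianization (Rack.EnvelGroup (Quandle.Conj G)) :=
    (MulEquiv.multiplicativeAdditive _).toMonoidHom.comp
      ((AddMonoidHom.toMultiplicative s).comp θ)
  have hs : ∀ c : ConjClasses G, s (Finsupp.single c 1) = Additive.ofMul (e c) := by
    intro c
    show (Finsupp.liftAddHom fun c => (zmultiplesHom _) (Additive.ofMul (e c)))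
        (Finsupp.single c 1) = Additive.ofMul (e c)
    rw [Finsupp.liftAddHom_apply_single, zmultiplesHom_apply, one_zsmul]
  have hψ : ψ = Abelianization.of := by
    apply stmt14_hom_ext
    intro x
    show Additive.toMul (s (Multiplicative.toAdd (θ (φ x)))) = Abelianization.of (φ x)
    have hθx : Multiplicative.toAdd (θ (φ x)) = Finsupp.single (ConjClasses.mk x) 1 := rfl
    rw [hθx, hs]
    exact he x
  -- finite order implies trivial image in the free abelian group
  obtain ⟨n, hn, hpow⟩ := isOfFinOrder_iff_pow_eq_one.mp hz
  have hθz : θ z = 1 := by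
    have h1 : (θ z) ^ n = 1 := by rw [← map_pow, hpow, map_one]
    have h2 : n • Multiplicative.toAdd (θ z) = 0 := by
      rw [← toAdd_pow, h1]; rfl
    have h3 : Multiplicative.toAdd (θ z) = 0 := by
      ext c
      have h4 := congrFun (congrArg DFunLike.coe h2) c
      simp only [Finsupp.smul_apply, Finsupp.coe_zero, Pi.zero_apply, nsmul_eq_mul] at h4
      simp only [Finsupp.coe_zero, Pi.zero_apply]
      rcases mul_eq_zero.mp h4 with h | h
      · exact absurd (Nat.cast_eq_zero.mp h) hn.ne'
      · exact h
    rw [← ofAdd_toAdd (θ z), h3, ofAdd_zero]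
  have : Abelianization.of z = 1 := by
    rw [← hψ]
    show Additive.toMul (s (Multiplicative.toAdd (θ z))) = 1
    rw [hθz]
    show Additive.toMul (s 0) = 1
    rw [map_zero s]
    rfl
  exact (QuotientGroup.eq_one_iff z).mp this


theorem stmt14_comm_aux {H : Type*} [Group H] (a b w v : H)
    (hw : ∀ x, w * x = x * w) (hv : ∀ x, v * x = x * v) :
    ⁅a * w, b * v⁆ = ⁅a, b⁆ := by
  have h1 : w * (b * v) * w⁻¹ = b * v := by rw [hw (b * v)]; group
  have h2 : v * a⁻¹ * v⁻¹ = a⁻¹ := by rw [hv a⁻¹]; group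
  have step1 : ⁅a * w, b * v⁆ = ⁅a, b * v⁆ := by
    calc ⁅a * w, b * v⁆ = a * (w * (b * v) * w⁻¹) * a⁻¹ * (b * v)⁻¹ := by
          rw [commutatorElement_def]; group
    _ = ⁅a, b * v⁆ := by rw [h1, commutatorElement_def]
  have step2 : ⁅a, b * v⁆ = ⁅a, b⁆ := by
    calc ⁅a, b * v⁆ = a * b * (v * a⁻¹ * v⁻¹) * b⁻¹ := by
          rw [commutatorElement_def]; group
    _ = ⁅a, b⁆ := by rw [h2, commutatorElement_def]
  rw [step1, step2]

/-- For a finite group `G`, with `π : A(G) → G` the canonical homomorphism and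
`Z₁ = ker π`, an element `z ∈ Z₁` lies in the derived subgroup of `A(G)` iff it has finite
order; i.e. `Z₁ ∩ A(G)' = Tor(Z₁)`. -/
theorem stmt14 {G : Type*} [Group G] [Finite G]
    (π : Rack.EnvelGroup (Quandle.Conj G) →* G)
    (hπ : ∀ g : G, π (Rack.toEnvelGroup (Quandle.Conj G) g) = g) :
    ∀ z ∈ π.ker,
      (z ∈ commutator (Rack.EnvelGroup (Quandle.Conj G)) ↔ IsOfFinOrder z) := by
  set φ := Rack.toEnvelGroup (Quandle.Conj G) with hφ
  -- every element of the kernel is central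
  have hcent : ∀ w ∈ π.ker, ∀ a : Rack.EnvelGroup (Quandle.Conj G), Commute w a := by
    intro w hw a
    have ha : a ∈ Subgroup.closure (Set.range φ) := by rw [stmt14_closure]; trivial
    induction ha using Subgroup.closure_induction with
    | mem b hb =>
        obtain ⟨y, rfl⟩ := hb
        have h1 := stmt14_conj_formula π hπ w y
        rw [MonoidHom.mem_ker.mp hw, one_mul, inv_one, mul_one] at h1
        have : w * φ y = φ y * w := by
          calc w * φ y = w * φ y * w⁻¹ * w := by group
          _ = φ y * w := by rw [h1]
        exact this
    | one => exact Commute.one_right w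
    | mul b c _ _ ihb ihc => exact ihb.mul_right ihc
    | inv b _ ihb => exact ihb.inv_right
  -- the commutator subgroup is finite (Schur)
  have hdecomp : ∀ a : Rack.EnvelGroup (Quandle.Conj G),
      ∃ w ∈ π.ker, a = φ (π a) * w := by
    intro a
    refine ⟨(φ (π a))⁻¹ * a, ?_, by group⟩
    rw [MonoidHom.mem_ker, map_mul, map_inv, hπ, inv_mul_cancel]
  have hset : commutatorSet (Rack.EnvelGroup (Quandle.Conj G)) ⊆
      Set.range (fun p : G × G => ⁅φ p.1, φ p.2⁆) := by
    rintro g ⟨a, b, rfl⟩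
    obtain ⟨w, hw, hwa⟩ := hdecomp a
    obtain ⟨v, hv, hvb⟩ := hdecomp b
    refine ⟨(π a, π b), ?_⟩
    show ⁅φ (π a), φ (π b)⁆ = ⁅a, b⁆
    conv_rhs => rw [hwa, hvb]
    exact (stmt14_comm_aux (φ (π a)) (φ (π b)) w v
      (fun x => (hcent w hw x).eq) (fun x => (hcent v hv x).eq)).symm
  have hfin : (commutatorSet (Rack.EnvelGroup (Quandle.Conj G))).Finite :=
    Set.Finite.subset (Set.finite_range _) hset
  haveI : Finite (commutatorSet (Rack.EnvelGroup (Quandle.Conj G))) := hfin.to_subtype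
  intro z hz
  constructor
  · intro hzc
    have h1 : IsOfFinOrder (⟨z, hzc⟩ : commutator (Rack.EnvelGroup (Quandle.Conj G))) :=
      isOfFinOrder_of_finite _
    obtain ⟨n, hn, hpow⟩ := isOfFinOrder_iff_pow_eq_one.mp h1
    refine isOfFinOrder_iff_pow_eq_one.mpr ⟨n, hn, ?_⟩
    have := congrArg (Subgroup.subtype _) hpow
    simpa using this
  · exact fun h => stmt14_finorder_mem_commutator z h
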